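/- Let P be an invertible linear map on a finite-dimensional real vector space E = E_u ⊕ E_s preserving the splitting, such that all complex eigenvalues of P restricted to E_u have absolute value < 1 and all complex eigenvalues of P restricted to E_s have absolute value > 1. Then |det(I - P)| = (-1)^{dim E_s} · sgn(det(P|_{E_s})) · det(I - P). -/

import Mathlib

open Matrix

/-- If `t•1 - M` is singular over `ℝ`, then `t` is in the complex spectrum of `M`. -/
lemma mem_spectrum_of_det_eq_zero {n : ℕ} (M : Matrix (Fin n) (Fin n) ℝ) (t : ℝ)
    (h : (t • (1 : Matrix (Fin n) (Fin n) ℝ) - M).det = 0) :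
    (t : ℂ) ∈ spectrum ℂ (M.map (fun a : ℝ => (a : ℂ))) := by
  rw [spectrum.mem_iff]
  intro hunit
  rw [Matrix.isUnit_iff_isUnit_det, isUnit_iff_ne_zero] at hunit
  apply hunit
  have hmap : algebraMap ℂ (Matrix (Fin n) (Fin n) ℂ) (t : ℂ) - M.map (fun a : ℝ => (a : ℂ))
      = ((t • (1 : Matrix (Fin n) (Fin n) ℝ) - M)).map (fun a : ℝ => (a : ℂ)) := by
    ext i j
    simp [Matrix.algebraMap_matrix_apply, Matrix.one_apply, Matrix.sub_apply, Matrix.smul_apply]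
    split <;> simp
  rw [hmap]
  have : (((t • (1 : Matrix (Fin n) (Fin n) ℝ) - M)).map (fun a : ℝ => (a : ℂ))).det
      = (((t • (1 : Matrix (Fin n) (Fin n) ℝ) - M)).det : ℂ) :=
    by exact (RingHom.map_det Complex.ofRealHom (t • (1 : Matrix (Fin n) (Fin n) ℝ) - M)).symm
  rw [this, h, Complex.ofReal_zero]

/-- A continuous nonvanishing function on `[0,1]` has the same sign at the endpoints. -/
lemma same_sign_endpoints (f : ℝ → ℝ) (hf : Continuous f)
    (h : ∀ t ∈ Set.Icc (0:ℝ) 1, f t ≠ 0) : 0 < f 0 * f 1 := by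
  rcases lt_trichotomy (f 0 * f 1) 0 with hlt | heq | hgt
  · exfalso
    rcases mul_neg_iff.mp hlt with ⟨h0, h1⟩ | ⟨h0, h1⟩
    · have : (0:ℝ) ∈ Set.Icc (f 1) (f 0) := ⟨le_of_lt h1, le_of_lt h0⟩
      obtain ⟨t, ht, hft⟩ := intermediate_value_Icc' (by norm_num : (0:ℝ) ≤ 1)
        (hf.continuousOn) this
      exact h t ht hft
    · have : (0:ℝ) ∈ Set.Icc (f 0) (f 1) := ⟨le_of_lt h0, le_of_lt h1⟩
      obtain ⟨t, ht, hft⟩ := intermediate_value_Icc (by norm_num : (0:ℝ) ≤ 1)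
        (hf.continuousOn) this
      exact h t ht hft
  · exfalso
    rcases mul_eq_zero.mp heq with h0 | h1
    · exact h 0 (by norm_num) h0
    · exact h 1 (by norm_num) h1
  · exact hgt

/-- For an invertible linear map `P = diag(P_u, P_s)` on `E = E_u ⊕ E_s` whose
eigenvalues on `E_u` have absolute value `< 1` and whose eigenvalues on `E_s` have
absolute value `> 1`, we have
`|det(I - P)| = (-1)^{dim E_s} ⬝ sgn(det P|_{E_s}) ⬝ det(I - P)`. -/
theorem abs_det_one_sub_eq (nu ns : ℕ)
    (Pu : Matrix (Fin nu) (Fin nu) ℝ) (Ps : Matrix (Fin ns) (Fin ns) ℝ)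
    (hP : IsUnit (Matrix.fromBlocks Pu 0 0 Ps).det)
    (hu : ∀ μ ∈ spectrum ℂ (Pu.map (fun a : ℝ => (a : ℂ))), ‖μ‖ < 1)
    (hs : ∀ μ ∈ spectrum ℂ (Ps.map (fun a : ℝ => (a : ℂ))), 1 < ‖μ‖) :
    |(1 - Matrix.fromBlocks Pu 0 0 Ps).det| =
      (-1 : ℝ) ^ ns * Real.sign Ps.det * (1 - Matrix.fromBlocks Pu 0 0 Ps).det := by
  -- block decomposition of the determinant
  have hblock : (1 - Matrix.fromBlocks Pu 0 0 Ps) =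
      Matrix.fromBlocks (1 - Pu) 0 0 (1 - Ps) := by
    rw [← Matrix.fromBlocks_one]
    ext i j
    cases i <;> cases j <;> simp [Matrix.fromBlocks]
  have hdet : (1 - Matrix.fromBlocks Pu 0 0 Ps).det = (1 - Pu).det * (1 - Ps).det := by
    rw [hblock, Matrix.det_fromBlocks_zero₂₁]
  -- det Ps ≠ 0
  have hPs0 : Ps.det ≠ 0 := by
    rw [Matrix.det_fromBlocks_zero₂₁, isUnit_iff_ne_zero] at hP
    exact fun h => hP (by rw [h, mul_zero])
  -- positivity of det (1 - Pu)
  have hfu : Continuous (fun t : ℝ => (1 - t • Pu).det) := by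
    exact (Continuous.sub continuous_const (continuous_id.smul continuous_const)).matrix_det
  have hune : ∀ t ∈ Set.Icc (0:ℝ) 1, (1 - t • Pu).det ≠ 0 := by
    intro t ht hdet0
    rcases eq_or_lt_of_le ht.1 with h0 | h0
    · rw [← h0] at hdet0; simp at hdet0
    · -- t > 0 : then 1/t is an eigenvalue of Pu with |1/t| ≥ 1
      have ht0 : t ≠ 0 := ne_of_gt h0
      have : ((1/t) • (1 - t • Pu)) = (1/t) • (1 : Matrix (Fin nu) (Fin nu) ℝ) - Pu := by
        rw [smul_sub, smul_smul, one_div, inv_mul_cancel₀ ht0, one_smul]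
      have hdet1 : ((1/t) • (1 : Matrix (Fin nu) (Fin nu) ℝ) - Pu).det = 0 := by
        rw [← this, Matrix.det_smul, hdet0, mul_zero]
      have hmem := mem_spectrum_of_det_eq_zero Pu (1/t) hdet1
      have := hu _ hmem
      rw [Complex.norm_real, Real.norm_eq_abs, abs_of_pos (by positivity : (0:ℝ) < 1/t)] at this
      have : (1:ℝ) < t := by
        rw [div_lt_one h0] at this
        exact this
      linarith [ht.2]
  have hu_pos : 0 < (1 - Pu).det := by
    have := same_sign_endpoints _ hfu hune
    simpa using this
  -- sign of det (1 - Ps)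
  have hfs : Continuous (fun t : ℝ => (t • (1 : Matrix (Fin ns) (Fin ns) ℝ) - Ps).det) := by
    exact (Continuous.sub (continuous_id.smul continuous_const) continuous_const).matrix_det
  have hsne : ∀ t ∈ Set.Icc (0:ℝ) 1, (t • (1 : Matrix (Fin ns) (Fin ns) ℝ) - Ps).det ≠ 0 := by
    intro t ht hdet0
    have hmem := mem_spectrum_of_det_eq_zero Ps t hdet0
    have := hs _ hmem
    rw [Complex.norm_real, Real.norm_eq_abs, abs_of_nonneg ht.1] at this
    linarith [ht.2]
  have hs_sign : 0 < ((-1:ℝ)^ns * Ps.det) * (1 - Ps).det := by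
    have := same_sign_endpoints _ hfs hsne
    have h0 : ((0:ℝ) • (1 : Matrix (Fin ns) (Fin ns) ℝ) - Ps).det = (-1:ℝ)^ns * Ps.det := by
      simp [Matrix.det_neg]
    have h1 : ((1:ℝ) • (1 : Matrix (Fin ns) (Fin ns) ℝ) - Ps).det = (1 - Ps).det := by
      simp
    rw [h0, h1] at this
    exact this
  -- conclusion
  have hsign : Real.sign Ps.det = Ps.det / |Ps.det| := by
    rcases lt_trichotomy Ps.det 0 with h | h | h
    · rw [Real.sign_of_neg h, abs_of_neg h]
      field_simp
    · exact absurd h hPs0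
    · rw [Real.sign_of_pos h, abs_of_pos h]
      field_simp
  have key : 0 < ((-1:ℝ)^ns * Real.sign Ps.det) * (1 - Ps).det := by
    rw [hsign]
    have : ((-1:ℝ)^ns * (Ps.det / |Ps.det|)) * (1 - Ps).det
        = (((-1:ℝ)^ns * Ps.det) * (1 - Ps).det) / |Ps.det| := by ring
    rw [this]
    exact div_pos hs_sign (abs_pos.mpr hPs0)
  have habs : |((-1:ℝ)^ns * Real.sign Ps.det)| = 1 := by
    rw [abs_mul, abs_pow, abs_neg, abs_one, one_pow, one_mul]
    rcases lt_trichotomy Ps.det 0 with h | h | h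
    · rw [Real.sign_of_neg h]; norm_num
    · exact absurd h hPs0
    · rw [Real.sign_of_pos h]; norm_num
  rw [hdet]
  calc |(1 - Pu).det * (1 - Ps).det|
      = |(1 - Pu).det * (((-1:ℝ)^ns * Real.sign Ps.det) * (1 - Ps).det)| := by
        rw [abs_mul, abs_mul ((1 - Pu).det), abs_mul, habs, one_mul]
    _ = (1 - Pu).det * (((-1:ℝ)^ns * Real.sign Ps.det) * (1 - Ps).det) := by
        exact abs_of_pos (mul_pos hu_pos key)
    _ = (-1:ℝ)^ns * Real.sign Ps.det * ((1 - Pu).det * (1 - Ps).det) := by ring
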